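/- Let X be a real m×n matrix and Z a real n×n matrix such that X = XZ and ‖Z‖_* = rank(X). Then rank(Z) = rank(X) and every nonzero singular value of Z equals 1. -/

import Mathlib

open Matrix

/-- The nuclear norm of a real matrix: the sum of its singular values
(the square roots of the eigenvalues of `Aᵀ * A`). -/
noncomputable def nuclearNorm {m n : Type*} [Fintype m] [Fintype n] [DecidableEq n]
    (A : Matrix m n ℝ) : ℝ :=
  ∑ i, Real.sqrt ((show (Aᵀ * A).IsHermitian by
    simpa only [Matrix.conjTranspose_eq_transpose_of_trivial] using
      Matrix.isHermitian_conjTranspose_mul_self A).eigenvalues i)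

/-- The singular values of a real matrix: the square roots of the eigenvalues
of `Aᵀ * A`. -/
noncomputable def singularValues {m n : Type*} [Fintype m] [Fintype n] [DecidableEq n]
    (A : Matrix m n ℝ) : n → ℝ :=
  fun i => Real.sqrt ((show (Aᵀ * A).IsHermitian by
    simpa only [Matrix.conjTranspose_eq_transpose_of_trivial] using
      Matrix.isHermitian_conjTranspose_mul_self A).eigenvalues i)

lemma aux_dot_cs {n : ℕ} (a b : Fin n → ℝ) :
    a ⬝ᵥ b ≤ Real.sqrt (a ⬝ᵥ a) * Real.sqrt (b ⬝ᵥ b) := by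
  have h := Finset.sum_mul_sq_le_sq_mul_sq Finset.univ a b
  have h1 : a ⬝ᵥ b ≤ |a ⬝ᵥ b| := le_abs_self _
  have h2 : |a ⬝ᵥ b| = Real.sqrt ((a ⬝ᵥ b) ^ 2) := (Real.sqrt_sq_eq_abs _).symm
  calc a ⬝ᵥ b ≤ Real.sqrt ((a ⬝ᵥ b) ^ 2) := h2 ▸ h1
    _ ≤ Real.sqrt ((∑ i, a i ^ 2) * (∑ i, b i ^ 2)) := Real.sqrt_le_sqrt h
    _ = Real.sqrt (a ⬝ᵥ a) * Real.sqrt (b ⬝ᵥ b) := by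
        rw [Real.sqrt_mul (by positivity)]
        simp [dotProduct, sq]

lemma aux_dot_self_nonneg {n : ℕ} (a : Fin n → ℝ) : 0 ≤ a ⬝ᵥ a := by
  have : a ⬝ᵥ a = ∑ i, a i ^ 2 := by simp [dotProduct, sq]
  rw [this]; positivity

lemma aux_trace_conj {n : ℕ} (U M : Matrix (Fin n) (Fin n) ℝ) (hU : U * Uᵀ = 1) :
    M.trace = ∑ j, (fun i => U i j) ⬝ᵥ (M *ᵥ fun i => U i j) := by
  have h : M.trace = (Uᵀ * (M * U)).trace := by
    rw [trace_mul_comm, Matrix.mul_assoc, hU, Matrix.mul_one]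
  rw [h, Matrix.trace]
  refine Finset.sum_congr rfl fun j _ => ?_
  simp only [diag_apply, Matrix.mul_apply, transpose_apply, dotProduct, mulVec, dotProduct,
    Finset.mul_sum, Finset.sum_mul]

/-- If `X = X * Z` and the nuclear norm of `Z` equals `rank X`, then `rank Z = rank X`
and every nonzero singular value of `Z` equals `1`. -/
theorem rank_eq_and_singularValues_eq_one {m n : ℕ} (X : Matrix (Fin m) (Fin n) ℝ)
    (Z : Matrix (Fin n) (Fin n) ℝ) (hXZ : X = X * Z)
    (hnn : nuclearNorm Z = (X.rank : ℝ)) :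
    Z.rank = X.rank ∧ ∀ i : Fin n, singularValues Z i ≠ 0 → singularValues Z i = 1 := by
  classical
  -- the subspace V = row space of X, inside Euclidean space
  set e := (WithLp.linearEquiv 2 ℝ (Fin n → ℝ)).symm with he
  set L : (Fin m → ℝ) →ₗ[ℝ] EuclideanSpace ℝ (Fin n) := e.toLinearMap ∘ₗ Xᵀ.mulVecLin with hL
  set V : Submodule ℝ (EuclideanSpace ℝ (Fin n)) := LinearMap.range L with hV
  have hdimV : Module.finrank ℝ V = X.rank := by
    have h1 : V = Submodule.map (e : (Fin n → ℝ) →ₗ[ℝ] EuclideanSpace ℝ (Fin n))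
        (LinearMap.range Xᵀ.mulVecLin) := by
      rw [hV, hL, LinearMap.range_comp]
    rw [h1, LinearEquiv.finrank_map_eq, ← Matrix.rank_transpose X]
    rfl
  -- Z fixes V (acting by Zᵀ on columns)
  have hfix : ∀ v : EuclideanSpace ℝ (Fin n), v ∈ V → Zᵀ *ᵥ (⇑v : Fin n → ℝ) = ⇑v := by
    rintro v ⟨w, rfl⟩
    show Zᵀ *ᵥ (Xᵀ *ᵥ w) = Xᵀ *ᵥ w
    rw [mulVec_mulVec, ← Matrix.transpose_mul, ← hXZ]
  -- orthonormal basis of V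
  set d := Module.finrank ℝ V with hd
  set b := stdOrthonormalBasis ℝ V with hb
  set B : Matrix (Fin d) (Fin n) ℝ := fun i j => ((b i : EuclideanSpace ℝ (Fin n)) : Fin n → ℝ) j
    with hB
  have hBB : B * Bᵀ = 1 := by
    ext i k
    have := orthonormal_iff_ite.mp b.orthonormal i k
    rw [Submodule.coe_inner] at this
    simp only [PiLp.inner_apply, RCLike.inner_apply, starRingEnd_apply, star_trivial] at this
    simp only [Matrix.mul_apply, Matrix.transpose_apply, Matrix.one_apply]
    rw [← this]
    refine Finset.sum_congr rfl fun x _ => ?_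
    simp only [hB]
    exact mul_comm _ _
  have hBZ : B * Z = B := by
    ext i j
    have h1 : Zᵀ *ᵥ (fun j => B i j) = fun j => B i j := hfix _ (b i).2
    have h2 := congrFun h1 j
    simp only [mulVec, dotProduct, transpose_apply] at h2
    simp only [Matrix.mul_apply]
    rw [← h2]
    exact Finset.sum_congr rfl fun k _ => mul_comm _ _
  set P : Matrix (Fin n) (Fin n) ℝ := Bᵀ * B with hP
  have hPZ : P * Z = P := by rw [hP, Matrix.mul_assoc, hBZ]
  have hZP : Zᵀ * P = P := by
    rw [hP, ← Matrix.mul_assoc, ← Matrix.transpose_mul, hBZ]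
  have htrP : P.trace = (d : ℝ) := by
    rw [hP, trace_mul_comm, hBB, Matrix.trace_one]
    simp
  -- eigen data
  set hA : (Zᵀ * Z).IsHermitian := (show (Zᵀ * Z).IsHermitian by
    simpa only [Matrix.conjTranspose_eq_transpose_of_trivial] using
      Matrix.isHermitian_conjTranspose_mul_self Z) with hA'
  set μ : Fin n → ℝ := hA.eigenvalues with hμ
  set u : Fin n → Fin n → ℝ := fun j => ⇑(hA.eigenvectorBasis j) with hu
  have huu : ∀ i k, u i ⬝ᵥ u k = if i = k then 1 else 0 := by
    intro i k
    have := orthonormal_iff_ite.mp hA.eigenvectorBasis.orthonormal i k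
    simp only [PiLp.inner_apply, RCLike.inner_apply, starRingEnd_apply, star_trivial] at this
    rw [← this]
    simp only [dotProduct, hu]
    exact Finset.sum_congr rfl fun x _ => mul_comm _ _
  have hAu : ∀ j, (Zᵀ * Z) *ᵥ u j = μ j • u j := fun j => hA.mulVec_eigenvectorBasis j
  have hZu : ∀ j, (Z *ᵥ u j) ⬝ᵥ (Z *ᵥ u j) = μ j := by
    intro j
    have h1 : u j ⬝ᵥ ((Zᵀ * Z) *ᵥ u j) = μ j := by
      rw [hAu j, dotProduct_smul, smul_eq_mul, huu j j]
      simp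
    have h2 : u j ⬝ᵥ ((Zᵀ * Z) *ᵥ u j) = (Z *ᵥ u j) ⬝ᵥ (Z *ᵥ u j) := by
      rw [← mulVec_mulVec, Matrix.dotProduct_mulVec, Matrix.vecMul_transpose]
    rw [← h1, h2]
  have hμ0 : ∀ j, 0 ≤ μ j := by
    intro j; rw [← hZu j]; exact aux_dot_self_nonneg _
  -- singular values
  have hσ : ∀ j, singularValues Z j = Real.sqrt (μ j) := fun j => rfl
  -- trace identity with eigenvector unitary
  set U : Matrix (Fin n) (Fin n) ℝ := (hA.eigenvectorUnitary : Matrix (Fin n) (Fin n) ℝ) with hU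
  have hUcol : ∀ i j, U i j = u j i := fun i j => rfl
  have hUU : U * Uᵀ = 1 := by
    have h := hA.eigenvectorUnitary.2
    rw [Matrix.mem_unitaryGroup_iff] at h
    rw [Matrix.star_eq_conjTranspose, Matrix.conjTranspose_eq_transpose_of_trivial] at h
    exact h
  have key : ∀ M : Matrix (Fin n) (Fin n) ℝ, M.trace = ∑ j, u j ⬝ᵥ (M *ᵥ u j) := by
    intro M
    rw [aux_trace_conj U M hUU]
    exact Finset.sum_congr rfl fun j _ => rfl
  -- the per-index quantity
  have hPsymm : Pᵀ = P := by
    rw [hP, Matrix.transpose_mul, Matrix.transpose_transpose]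
  set t : Fin n → ℝ := fun j => (P *ᵥ u j) ⬝ᵥ (Z *ᵥ u j) with ht
  have hsum_t : ∑ j, t j = (d : ℝ) := by
    have h1 : (P * Z).trace = ∑ j, t j := by
      rw [key (P * Z)]
      refine Finset.sum_congr rfl fun j _ => ?_
      rw [← mulVec_mulVec, Matrix.dotProduct_mulVec, ← Matrix.mulVec_transpose, hPsymm, ht]
    rw [hPZ] at h1
    rw [← h1, htrP]
  -- norms of projections
  have huPu : ∀ j, u j ⬝ᵥ (P *ᵥ u j) = (B *ᵥ u j) ⬝ᵥ (B *ᵥ u j) := by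
    intro j
    rw [hP, ← mulVec_mulVec, Matrix.dotProduct_mulVec, Matrix.vecMul_transpose]
  have hPuu : ∀ j, (P *ᵥ u j) ⬝ᵥ (P *ᵥ u j) = (B *ᵥ u j) ⬝ᵥ (B *ᵥ u j) := by
    intro j
    have h0 : P *ᵥ u j = Bᵀ *ᵥ (B *ᵥ u j) := by rw [mulVec_mulVec, ← hP]
    rw [h0, Matrix.dotProduct_mulVec, Matrix.vecMul_transpose, mulVec_mulVec, hBB,
      Matrix.one_mulVec]
  have hexpand : ∀ j, (u j - P *ᵥ u j) ⬝ᵥ (u j - P *ᵥ u j)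
      = 1 - (B *ᵥ u j) ⬝ᵥ (B *ᵥ u j) := by
    intro j
    rw [sub_dotProduct, dotProduct_sub, dotProduct_sub,
      dotProduct_comm (P *ᵥ u j) (u j), huPu, hPuu, huu]
    norm_num
  have hw1 : ∀ j, (B *ᵥ u j) ⬝ᵥ (B *ᵥ u j) ≤ 1 := by
    intro j
    have h0 := aux_dot_self_nonneg (u j - P *ᵥ u j)
    rw [hexpand j] at h0
    linarith
  have htle : ∀ j, t j ≤ Real.sqrt ((B *ᵥ u j) ⬝ᵥ (B *ᵥ u j)) * Real.sqrt (μ j) := by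
    intro j
    have h0 := aux_dot_cs (P *ᵥ u j) (Z *ᵥ u j)
    rw [hZu j, hPuu j] at h0
    exact h0
  have htle' : ∀ j, t j ≤ Real.sqrt (μ j) := by
    intro j
    refine (htle j).trans ?_
    have h1 : Real.sqrt ((B *ᵥ u j) ⬝ᵥ (B *ᵥ u j)) ≤ 1 := by
      rw [show (1:ℝ) = Real.sqrt 1 by simp]
      exact Real.sqrt_le_sqrt (hw1 j)
    exact mul_le_of_le_one_left (Real.sqrt_nonneg _) h1
  have hdr : (d : ℝ) = (X.rank : ℝ) := by exact_mod_cast congrArg Nat.cast hdimV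
  have hsum_σ : ∑ j, Real.sqrt (μ j) = (d : ℝ) := by
    rw [hdr]; rw [← hnn]; rfl
  have hteq : ∀ j, t j = Real.sqrt (μ j) := by
    have h0 : ∑ j, (Real.sqrt (μ j) - t j) = 0 := by
      rw [Finset.sum_sub_distrib, hsum_σ, hsum_t, sub_self]
    have h1 := (Finset.sum_eq_zero_iff_of_nonneg
      (fun j _ => sub_nonneg.mpr (htle' j))).mp h0
    intro j
    have := h1 j (Finset.mem_univ j)
    linarith
  have hone : ∀ j, Real.sqrt (μ j) ≠ 0 → Real.sqrt (μ j) = 1 := by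
    intro j hj
    have hσpos : 0 < Real.sqrt (μ j) := lt_of_le_of_ne (Real.sqrt_nonneg _) (Ne.symm hj)
    have h1 : 1 ≤ Real.sqrt ((B *ᵥ u j) ⬝ᵥ (B *ᵥ u j)) := by
      have h0 := htle j
      rw [hteq j] at h0
      have h0' : 1 * Real.sqrt (μ j) ≤ Real.sqrt ((B *ᵥ u j) ⬝ᵥ (B *ᵥ u j)) * Real.sqrt (μ j) := by
        rw [one_mul]; exact h0
      exact le_of_mul_le_mul_right h0' hσpos
    have h2 : (B *ᵥ u j) ⬝ᵥ (B *ᵥ u j) = 1 := by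
      have h3 : (1:ℝ) * 1 ≤ Real.sqrt ((B *ᵥ u j) ⬝ᵥ (B *ᵥ u j))
          * Real.sqrt ((B *ᵥ u j) ⬝ᵥ (B *ᵥ u j)) :=
        mul_le_mul h1 h1 zero_le_one (le_trans zero_le_one h1)
      rw [Real.mul_self_sqrt (aux_dot_self_nonneg _), one_mul] at h3
      linarith [hw1 j]
    have h4 : u j = P *ᵥ u j := by
      have h5 : (u j - P *ᵥ u j) ⬝ᵥ (u j - P *ᵥ u j) = 0 := by rw [hexpand j, h2]; ring
      have h6 := dotProduct_self_eq_zero.mp h5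
      exact sub_eq_zero.mp h6
    have h7 : Zᵀ *ᵥ u j = u j := by
      conv_lhs => rw [h4]
      rw [mulVec_mulVec, hZP, ← h4]
    have h8 : t j = 1 := by
      rw [ht]
      simp only
      rw [← h4, Matrix.dotProduct_mulVec, ← Matrix.mulVec_transpose, h7, huu]
      simp
    rw [← hteq j, h8]
  constructor
  · have hZX : ((Zᵀ * Z) : Matrix (Fin n) (Fin n) ℝ) = Zᴴ * Z := by
      congr 1
    have hr1 : Z.rank = Fintype.card {i // μ i ≠ 0} := by
      rw [← Matrix.rank_transpose_mul_self Z]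
      rw [show ((Zᵀ * Z) : Matrix (Fin n) (Fin n) ℝ).rank = (Zᴴ * Z).rank by rw [hZX]]
      exact hA.rank_eq_card_non_zero_eigs
    have hμσ : ∀ j, μ j ≠ 0 ↔ Real.sqrt (μ j) ≠ 0 := by
      intro j
      rw [not_iff_not, Real.sqrt_eq_zero (hμ0 j)]
    have hcard : Fintype.card {i // μ i ≠ 0}
        = (Finset.univ.filter (fun j => Real.sqrt (μ j) ≠ 0)).card := by
      rw [Fintype.card_subtype]
      congr 1
      ext j
      simp [hμσ j]
    have hsum2 : ((Finset.univ.filter (fun j => Real.sqrt (μ j) ≠ 0)).card : ℝ)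
        = (X.rank : ℝ) := by
      rw [← hdr, ← hsum_σ]
      rw [← Finset.sum_filter_ne_zero Finset.univ (f := fun j => Real.sqrt (μ j))]
      rw [Finset.card_eq_sum_ones, Nat.cast_sum]
      refine (Finset.sum_congr rfl fun j hj => ?_).symm
      rw [Finset.mem_filter] at hj
      rw [hone j hj.2]
      simp
    rw [hr1, hcard]
    exact_mod_cast hsum2
  · intro i hi
    exact hone i hi
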